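/- Let F be a number field with ring of integers O_F. For every nonzero ideal 𝔞 of O_F, Σ_{𝔡 ∣ 𝔞} C_𝔞(𝔡) = N(𝔞) · ∏_{𝔭 ∣ 𝔞, 𝔭 prime} (1 − 2/N(𝔭)). -/

import Mathlib

open Finset Filter Topology Asymptotics NumberField Ideal
open scoped Classical

/-- The Möbius function on nonzero ideals of the ring of integers:
`μ(𝔞) = (−1)^{ω(𝔞)}` if `𝔞` is squarefree and `0` otherwise, where `ω(𝔞)` is
the number of distinct prime ideal factors of `𝔞`. -/
noncomputable def muI {F : Type*} [Field F] [NumberField F] (a : Ideal (𝓞 F)) : ℤ :=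
  if Squarefree a then
    (-1) ^ (UniqueFactorizationMonoid.normalizedFactors a).toFinset.card
  else 0

/-- The Ramanujan sum for ideals: `C_𝔞(𝔟) = ∑_{𝔡 ∣ 𝔞, 𝔡 ∣ 𝔟} N(𝔡)·μ(𝔞/𝔡)`. -/
noncomputable def ramI {F : Type*} [Field F] [NumberField F]
    (a b : Ideal (𝓞 F)) : ℤ :=
  ∑ᶠ d ∈ {d : Ideal (𝓞 F) | d ∣ a ∧ d ∣ b}, (absNorm d : ℤ) * muI (a / d)

section Aux

open UniqueFactorizationMonoid

variable {F : Type*} [Field F] [NumberField F]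

lemma aux_mul_div_cancel (d c : Ideal (𝓞 F)) (hd : d ≠ 0) : d * c / d = c := by
  apply le_antisymm
  · intro x hx
    rw [Submodule.mem_div_iff_forall_mul_mem] at hx
    have h1 : Ideal.span {x} * d ≤ c * d := by
      rw [Ideal.span_singleton_mul_le_iff]
      intro y hy
      rw [mul_comm c d]
      exact hx y hy
    have h3 : c ∣ Ideal.span {x} := (mul_dvd_mul_iff_right hd).mp (Ideal.dvd_iff_le.mpr h1)
    exact Ideal.le_of_dvd h3 (Ideal.mem_span_singleton_self x)
  · intro x hx
    rw [Submodule.mem_div_iff_forall_mul_mem]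
    intro y hy
    rw [mul_comm]
    exact Ideal.mul_mem_mul hx hy

lemma aux_mul_div_cancel' {d a : Ideal (𝓞 F)} (h : d ∣ a) (hd : d ≠ 0) : d * (a / d) = a := by
  obtain ⟨c, rfl⟩ := h
  rw [aux_mul_div_cancel d c hd]

lemma aux_div_dvd {d a : Ideal (𝓞 F)} (h : d ∣ a) (hd : d ≠ 0) : a / d ∣ a :=
  Dvd.intro_left d (aux_mul_div_cancel' h hd)

lemma aux_div_div {d a : Ideal (𝓞 F)} (h : d ∣ a) (hd : d ≠ 0) (ha : a ≠ 0) :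
    a / (a / d) = d := by
  obtain ⟨c, rfl⟩ := h
  have hc : c ≠ 0 := fun hc => ha (by rw [hc, mul_zero])
  rw [aux_mul_div_cancel d c hd, mul_comm, aux_mul_div_cancel c d hc]

lemma aux_finite_div (a : Ideal (𝓞 F)) (ha : a ≠ 0) : ({d : Ideal (𝓞 F) | d ∣ a}).Finite := by
  have h : Finite {x : Ideal (𝓞 F) // x ∣ a} :=
    @Finite.of_fintype _ (UniqueFactorizationMonoid.fintypeSubtypeDvd a ha)
  exact Set.finite_coe_iff.mp h

/-- The finset of divisors of a nonzero ideal. -/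
noncomputable def dvs (a : Ideal (𝓞 F)) : Finset (Ideal (𝓞 F)) :=
  if ha : a = 0 then ∅ else (aux_finite_div a ha).toFinset

lemma mem_dvs {a d : Ideal (𝓞 F)} (ha : a ≠ 0) : d ∈ dvs a ↔ d ∣ a := by
  rw [dvs, dif_neg ha, Set.Finite.mem_toFinset]
  rfl

lemma coe_dvs {a : Ideal (𝓞 F)} (ha : a ≠ 0) : (dvs a : Set (Ideal (𝓞 F))) = {d | d ∣ a} := by
  ext d
  simp [mem_dvs ha]

lemma aux_nf_prod (T : Finset (Ideal (𝓞 F))) (hT : ∀ p ∈ T, Prime p) :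
    normalizedFactors (∏ p ∈ T, p) = T.val := by
  have h : T.val.prod = ∏ p ∈ T, p := Finset.prod_val T
  rw [← h, normalizedFactors_prod_of_prime (fun p hp => hT p hp)]

lemma aux_prod_ne_zero (T : Finset (Ideal (𝓞 F))) (hT : ∀ p ∈ T, Prime p) :
    (∏ p ∈ T, p) ≠ 0 :=
  Finset.prod_ne_zero_iff.mpr fun p hp => (hT p hp).ne_zero

lemma aux_sqfree_prod (T : Finset (Ideal (𝓞 F))) (hT : ∀ p ∈ T, Prime p) :
    Squarefree (∏ p ∈ T, p) := by
  rw [UniqueFactorizationMonoid.squarefree_iff_nodup_normalizedFactors (aux_prod_ne_zero T hT),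
    aux_nf_prod T hT]
  exact T.nodup

lemma aux_muI_prod (T : Finset (Ideal (𝓞 F))) (hT : ∀ p ∈ T, Prime p) :
    muI (∏ p ∈ T, p) = (-1) ^ T.card := by
  rw [muI, if_pos (aux_sqfree_prod T hT), aux_nf_prod T hT]
  congr 1
  rw [Finset.card]
  congr 1
  exact Multiset.toFinset_eq T.nodup ▸ rfl

lemma aux_prod_injOn {a : Ideal (𝓞 F)} :
    Set.InjOn (fun T : Finset (Ideal (𝓞 F)) => ∏ p ∈ T, p)
      ((normalizedFactors a).toFinset.powerset : Set (Finset (Ideal (𝓞 F)))) := by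
  intro T₁ h₁ T₂ h₂ h
  simp only [Finset.coe_powerset, Set.mem_preimage, Set.mem_powerset_iff, Finset.coe_subset,
    Finset.mem_coe, Finset.mem_powerset] at h₁ h₂
  have hT₁ : ∀ p ∈ T₁, Prime p := fun p hp =>
    prime_of_normalized_factor p (Multiset.mem_toFinset.mp (h₁ hp))
  have hT₂ : ∀ p ∈ T₂, Prime p := fun p hp =>
    prime_of_normalized_factor p (Multiset.mem_toFinset.mp (h₂ hp))
  have := congrArg normalizedFactors h
  rw [aux_nf_prod T₁ hT₁, aux_nf_prod T₂ hT₂] at this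
  exact Finset.val_inj.mp this

lemma aux_filter_sqfree {a : Ideal (𝓞 F)} (ha : a ≠ 0) :
    (dvs a).filter Squarefree
      = ((normalizedFactors a).toFinset.powerset).image (fun T => ∏ p ∈ T, p) := by
  ext e
  simp only [Finset.mem_filter, Finset.mem_image, Finset.mem_powerset, mem_dvs ha]
  constructor
  · rintro ⟨hea, he⟩
    have he0 : e ≠ 0 := he.ne_zero
    refine ⟨(normalizedFactors e).toFinset, ?_, ?_⟩
    · exact Multiset.toFinset_subset.mpr (Multiset.subset_of_le
        ((dvd_iff_normalizedFactors_le_normalizedFactors he0 ha).mp hea))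
    · have hnodup : (normalizedFactors e).Nodup :=
        (UniqueFactorizationMonoid.squarefree_iff_nodup_normalizedFactors he0).mp he
      have : ((normalizedFactors e).toFinset.val : Multiset (Ideal (𝓞 F)))
          = normalizedFactors e := Multiset.dedup_eq_self.mpr hnodup
      rw [show (∏ p ∈ (normalizedFactors e).toFinset, p)
            = (normalizedFactors e).toFinset.val.prod from (Finset.prod_val _).symm, this]
      exact associated_iff_eq.mp (prod_normalizedFactors he0)
  · rintro ⟨T, hT, rfl⟩
    have hTp : ∀ p ∈ T, Prime p := fun p hp =>
      prime_of_normalized_factor p (Multiset.mem_toFinset.mp (hT hp))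
    refine ⟨?_, aux_sqfree_prod T hTp⟩
    have hle : T.val ≤ normalizedFactors a := by
      rw [Multiset.le_iff_subset T.nodup]
      intro p hp
      exact Multiset.mem_toFinset.mp (hT hp)
    calc (∏ p ∈ T, p) = T.val.prod := (Finset.prod_val T).symm
      _ ∣ (normalizedFactors a).prod := Multiset.prod_dvd_prod_of_le hle
      _ = a := associated_iff_eq.mp (prod_normalizedFactors ha)

lemma aux_card_dvs_sqfree (T : Finset (Ideal (𝓞 F))) (hT : ∀ p ∈ T, Prime p) :
    (dvs (∏ p ∈ T, p)).card = 2 ^ T.card := by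
  have hb0 := aux_prod_ne_zero T hT
  have hsq := aux_sqfree_prod T hT
  have h1 : dvs (∏ p ∈ T, p) = (dvs (∏ p ∈ T, p)).filter Squarefree := by
    ext d
    simp only [Finset.mem_filter, mem_dvs hb0, iff_self_and]
    exact fun hd => hsq.squarefree_of_dvd hd
  rw [h1, aux_filter_sqfree hb0, aux_nf_prod T hT]
  have h2 : T.val.toFinset = T := Multiset.toFinset_eq T.nodup ▸ rfl
  rw [h2, Finset.card_image_of_injOn ?_, Finset.card_powerset]
  have := @aux_prod_injOn F _ _ (∏ p ∈ T, p)
  rwa [aux_nf_prod T hT, h2] at this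

lemma aux_card_interval {a e : Ideal (𝓞 F)} (ha : a ≠ 0) (hea : e ∣ a) (he : e ≠ 0) :
    ((dvs a).filter (fun d => e ∣ d)).card = (dvs (a / e)).card := by
  have hae : e * (a / e) = a := aux_mul_div_cancel' hea he
  have hq0 : a / e ≠ 0 := by
    intro h
    rw [h, mul_zero] at hae
    exact ha hae.symm
  apply Finset.card_bij (fun d _ => d / e)
  · intro d hd
    rw [Finset.mem_filter, mem_dvs ha] at hd
    obtain ⟨hda, hed⟩ := hd
    obtain ⟨c, rfl⟩ := hed
    rw [aux_mul_div_cancel e c he, mem_dvs hq0]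
    have h2 : e * c ∣ e * (a / e) := by rw [hae]; exact hda
    exact (mul_dvd_mul_iff_left he).mp h2
  · intro d₁ h₁ d₂ h₂ hd
    rw [Finset.mem_filter] at h₁ h₂
    obtain ⟨c₁, rfl⟩ := h₁.2
    obtain ⟨c₂, rfl⟩ := h₂.2
    rw [aux_mul_div_cancel e c₁ he, aux_mul_div_cancel e c₂ he] at hd
    rw [hd]
  · intro c hc
    rw [mem_dvs hq0] at hc
    refine ⟨e * c, ?_, aux_mul_div_cancel e c he⟩
    rw [Finset.mem_filter, mem_dvs ha]
    refine ⟨?_, dvd_mul_right e c⟩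
    calc e * c ∣ e * (a / e) := mul_dvd_mul_left e hc
      _ = a := hae

end Aux


section Main

open UniqueFactorizationMonoid

/-- For every nonzero ideal `𝔞` of `O_F`:
`∑_{𝔡 ∣ 𝔞} C_𝔞(𝔡) = N(𝔞) · ∏_{𝔭 ∣ 𝔞 prime} (1 − 2/N(𝔭))`. -/
theorem sum_ramI_eq_norm_mul_prod {F : Type*} [Field F] [NumberField F]
    (a : Ideal (𝓞 F)) (ha : a ≠ ⊥) :
    ((∑ᶠ d ∈ {d : Ideal (𝓞 F) | d ∣ a}, ramI a d : ℤ) : ℝ)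
      = (absNorm a : ℝ)
          * ∏ᶠ p ∈ {p : Ideal (𝓞 F) | p.IsPrime ∧ p ∣ a},
              (1 - 2 / (absNorm p : ℝ)) := by
  have ha0 : a ≠ 0 := by rw [Ideal.zero_eq_bot]; exact ha
  set S := (normalizedFactors a).toFinset with hS
  -- properties of subsets of S
  have hprimes : ∀ T ∈ S.powerset, ∀ p ∈ T, Prime p := by
    intro T hT p hp
    exact prime_of_normalized_factor p
      (Multiset.mem_toFinset.mp ((Finset.mem_powerset.mp hT) hp))
  have hproddvd : ∀ T ∈ S.powerset, (∏ p ∈ T, p) ∣ a := by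
    intro T hT
    have hle : T.val ≤ normalizedFactors a := by
      rw [Multiset.le_iff_subset T.nodup]
      intro p hp
      exact Multiset.mem_toFinset.mp ((Finset.mem_powerset.mp hT) hp)
    calc (∏ p ∈ T, p) = T.val.prod := (Finset.prod_val T).symm
      _ ∣ (normalizedFactors a).prod := Multiset.prod_dvd_prod_of_le hle
      _ = a := associated_iff_eq.mp (prod_normalizedFactors ha0)
  -- Step A: outer finsum to finset sum
  have hA : (∑ᶠ d ∈ {d : Ideal (𝓞 F) | d ∣ a}, ramI a d) = ∑ d ∈ dvs a, ramI a d := by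
    rw [← coe_dvs ha0, finsum_mem_coe_finset]
  -- Step B: inner finsum to finset sum
  have hB : ∀ d ∈ dvs a, ramI a d
      = ∑ e ∈ (dvs a).filter (fun e => e ∣ d), (absNorm e : ℤ) * muI (a / e) := by
    intro d _
    rw [ramI, ← finsum_mem_coe_finset]
    congr 1
    ext e
    simp [mem_dvs ha0]
  -- Step C: swap the sums
  have hC : ∑ d ∈ dvs a, ∑ e ∈ (dvs a).filter (fun e => e ∣ d), (absNorm e : ℤ) * muI (a / e)
      = ∑ e ∈ dvs a,
          (((dvs a).filter (fun d => e ∣ d)).card : ℤ) * ((absNorm e : ℤ) * muI (a / e)) := by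
    simp_rw [Finset.sum_filter]
    rw [Finset.sum_comm]
    refine Finset.sum_congr rfl fun e _ => ?_
    rw [← Finset.sum_filter, Finset.sum_const, nsmul_eq_mul]
  -- Step D: count the interval
  have hD : ∀ e ∈ dvs a,
      (((dvs a).filter (fun d => e ∣ d)).card : ℤ) = ((dvs (a / e)).card : ℤ) := by
    intro e he
    rw [mem_dvs ha0] at he
    have he0 : e ≠ 0 := ne_zero_of_dvd_ne_zero ha0 he
    rw [aux_card_interval ha0 he he0]
  -- Step E: complement involution
  have hE : ∑ e ∈ dvs a, ((dvs (a / e)).card : ℤ) * ((absNorm e : ℤ) * muI (a / e))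
      = ∑ e ∈ dvs a, ((dvs e).card : ℤ) * ((absNorm (a / e) : ℤ) * muI e) := by
    refine Finset.sum_bij' (fun e _ => a / e) (fun e _ => a / e) ?_ ?_ ?_ ?_ ?_
    · intro e he
      rw [mem_dvs ha0] at he ⊢
      exact aux_div_dvd he (ne_zero_of_dvd_ne_zero ha0 he)
    · intro e he
      rw [mem_dvs ha0] at he ⊢
      exact aux_div_dvd he (ne_zero_of_dvd_ne_zero ha0 he)
    · intro e he
      rw [mem_dvs ha0] at he
      exact aux_div_div he (ne_zero_of_dvd_ne_zero ha0 he) ha0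
    · intro e he
      rw [mem_dvs ha0] at he
      exact aux_div_div he (ne_zero_of_dvd_ne_zero ha0 he) ha0
    · intro e he
      rw [mem_dvs ha0] at he
      rw [aux_div_div he (ne_zero_of_dvd_ne_zero ha0 he) ha0]
  -- Step F: restrict to squarefree e
  have hF : ∑ e ∈ dvs a, ((dvs e).card : ℤ) * ((absNorm (a / e) : ℤ) * muI e)
      = ∑ e ∈ (dvs a).filter Squarefree,
          ((dvs e).card : ℤ) * ((absNorm (a / e) : ℤ) * muI e) := by
    refine (Finset.sum_filter_of_ne fun e _ hne => ?_).symm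
    by_contra hsq
    rw [muI, if_neg hsq] at hne
    simp at hne
  -- Step G: parametrize squarefree divisors by subsets of S
  have hG : ∑ e ∈ (dvs a).filter Squarefree,
        ((dvs e).card : ℤ) * ((absNorm (a / e) : ℤ) * muI e)
      = ∑ T ∈ S.powerset, ((2 : ℤ) ^ T.card)
          * ((absNorm (a / ∏ p ∈ T, p) : ℤ) * (-1) ^ T.card) := by
    rw [aux_filter_sqfree ha0]
    rw [Finset.sum_image (fun x hx y hy h =>
      aux_prod_injOn (Finset.mem_coe.mpr hx) (Finset.mem_coe.mpr hy) h)]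
    refine Finset.sum_congr rfl fun T hT => ?_
    rw [aux_card_dvs_sqfree T (hprimes T hT), aux_muI_prod T (hprimes T hT)]
    push_cast
    ring
  -- Step I: rewrite the RHS finprod over S
  have hI : ∏ᶠ p ∈ {p : Ideal (𝓞 F) | p.IsPrime ∧ p ∣ a}, (1 - 2 / (absNorm p : ℝ))
      = ∏ p ∈ S, (1 - 2 / (absNorm p : ℝ)) := by
    rw [← finprod_mem_coe_finset]
    congr 1
    ext p
    simp only [Finset.mem_coe, hS, Multiset.mem_toFinset, Set.mem_setOf_eq,
      Ideal.mem_normalizedFactors_iff ha, Ideal.dvd_iff_le]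
  -- Step J: expand the product
  have hJ : ∏ p ∈ S, (1 - 2 / (absNorm p : ℝ))
      = ∑ T ∈ S.powerset, ∏ p ∈ T, (-2 / (absNorm p : ℝ)) := by
    have : ∀ p ∈ S, (1 - 2 / (absNorm p : ℝ)) = (-2 / (absNorm p : ℝ)) + 1 := by
      intro p _; ring
    rw [Finset.prod_congr rfl this, Finset.prod_add]
    simp
  -- Step K: termwise comparison
  have hK : ∀ T ∈ S.powerset,
      ((2 : ℝ) ^ T.card) * ((absNorm (a / ∏ p ∈ T, p) : ℝ) * (-1) ^ T.card)
        = (absNorm a : ℝ) * ∏ p ∈ T, (-2 / (absNorm p : ℝ)) := by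
    intro T hT
    have hTp := hprimes T hT
    have hdvd := hproddvd T hT
    have hb0 : (∏ p ∈ T, p) ≠ 0 := aux_prod_ne_zero T hTp
    have hNa' : absNorm ((∏ p ∈ T, p) * (a / ∏ p ∈ T, p))
        = absNorm (∏ p ∈ T, p) * absNorm (a / ∏ p ∈ T, p) :=
      MonoidHom.map_mul absNorm.toMonoidHom _ _
    have hNa : (absNorm (∏ p ∈ T, p) : ℝ) * (absNorm (a / ∏ p ∈ T, p) : ℝ)
        = (absNorm a : ℝ) := by
      rw [← Nat.cast_mul, ← hNa', aux_mul_div_cancel' hdvd hb0]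
    have hNp : ∀ p ∈ T, ((absNorm p : ℝ)) ≠ 0 := by
      intro p hp
      have : p ≠ 0 := (hTp p hp).ne_zero
      simpa [Ideal.absNorm_eq_zero_iff, Ideal.zero_eq_bot] using this
    have hprod' : absNorm (∏ p ∈ T, p) = ∏ p ∈ T, absNorm p :=
      map_prod absNorm.toMonoidHom _ _
    have hprod : (absNorm (∏ p ∈ T, p) : ℝ) = ∏ p ∈ T, (absNorm p : ℝ) := by
      rw [hprod']
      push_cast
      rfl
    rw [← hNa, hprod]
    rw [mul_comm (∏ p ∈ T, (absNorm p : ℝ)) _, mul_assoc, ← Finset.prod_mul_distrib]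
    have : ∀ p ∈ T, (absNorm p : ℝ) * (-2 / (absNorm p : ℝ)) = -2 := by
      intro p hp
      rw [mul_comm, div_mul_cancel₀ _ (hNp p hp)]
    rw [Finset.prod_congr rfl this, Finset.prod_const]
    have : ((-2 : ℝ)) ^ T.card = (-1) ^ T.card * 2 ^ T.card := by
      rw [← neg_one_mul, mul_pow]
    rw [this]
    ring
  -- assemble
  rw [hA, Finset.sum_congr rfl hB, hC, Finset.sum_congr rfl fun e he => by rw [hD e he],
    hE, hF, hG, hI, hJ, Finset.mul_sum]
  push_cast
  exact Finset.sum_congr rfl fun T hT => by rw [hK T hT]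
end Main
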